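/- Let p, n, i, j, k be natural numbers and let g ∈ F(A,B,C) be any element of the form g = h_0 A^i B^j C^k h_0^{-1} · ∏_{a=1}^p f_a (ABC) f_a^{-1} · ∏_{b=1}^n g_b (ABC)^{-1} g_b^{-1} for some h_0, f_a, g_b ∈ F(A,B,C). Then the spelling length satisfies Λ(g) ≥ i + j + k − (p + n + 2). -/

import Mathlib

/-- The conjugated-generator factor `h * c_i^{±1} * h⁻¹`. -/
def spellingFactor {n : ℕ} (x : FreeGroup (Fin n) × Fin n × Bool) : FreeGroup (Fin n) :=
  x.1 * (if x.2.2 then FreeGroup.of x.2.1 else (FreeGroup.of x.2.1)⁻¹) * x.1⁻¹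

/-- `L` is a spelling of `g`: a factorization of `g` into conjugated generators/inverse
generators. -/
def IsSpelling {n : ℕ} (g : FreeGroup (Fin n))
    (L : List (FreeGroup (Fin n) × Fin n × Bool)) : Prop :=
  (L.map spellingFactor).prod = g

/-- The spelling length `Λ(g)`: the least number of factors among all spellings of `g`. -/
noncomputable def spellingLength {n : ℕ} (g : FreeGroup (Fin n)) : ℕ :=
  sInf {r | ∃ L, IsSpelling g L ∧ L.length = r}

/-- The exponent sum (abelianized degree) of the generator `c_j` in `g`. -/
def degGen {n : ℕ} (g : FreeGroup (Fin n)) (j : Fin n) : ℤ :=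
  Multiplicative.toAdd
    ((FreeGroup.lift fun i => if i = j then Multiplicative.ofAdd (1 : ℤ) else 1) g)

namespace SP

abbrev L3 : Type := Fin 3 × Bool
abbrev W3 : Type := List L3

/-- inverse of a letter -/
def iv (x : L3) : L3 := (x.1, !x.2)

@[simp] lemma iv_iv (x : L3) : iv (iv x) = x := by simp [iv]

lemma iv_eq_iff {x y : L3} : x = iv y ↔ (x.1 = y.1 ∧ x.2 = !y.2) := by
  cases x; cases y; simp [iv, Prod.ext_iff, eq_comm]

/-- a word is reduced -/
def RedW (w : W3) : Prop := w.Chain' (fun a b => a ≠ iv b)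

lemma RedW.nil : RedW [] := List.isChain_nil

lemma RedW.single (x : L3) : RedW [x] := List.isChain_singleton x

lemma RedW.split {A B : W3} (h : RedW (A ++ B)) : RedW A ∧ RedW B :=
  ⟨(List.isChain_append.1 h).1, (List.isChain_append.1 h).2.1⟩

lemma RedW.tail {x : L3} {w : W3} (h : RedW (x :: w)) : RedW w := List.IsChain.tail h

lemma reduce_self_of_redW : ∀ {w : W3}, RedW w → FreeGroup.reduce w = w := by
  intro w
  induction w with
  | nil => simp
  | cons x t ih =>
    intro h
    rw [FreeGroup.reduce.cons, ih h.tail]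
    cases t with
    | nil => rfl
    | cons y t' =>
      have hxy : ¬ x = iv y := (List.isChain_cons_cons.mp h).1
      have : ¬ (x.1 = y.1 ∧ x.2 = !y.2) := fun hc => hxy (iv_eq_iff.mpr hc)
      simp only [this, if_false]

lemma redW_reduce (w : W3) : RedW (FreeGroup.reduce w) := by
  induction w with
  | nil => simpa using RedW.nil
  | cons x t ih =>
    rw [FreeGroup.reduce.cons]
    rcases h : FreeGroup.reduce t with _ | ⟨y, t'⟩
    · exact RedW.single x
    · rw [h] at ih
      by_cases hc : x.1 = y.1 ∧ x.2 = !y.2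
      · simpa only [hc, and_self, if_true] using ih.tail
      · simp only [hc, if_false]
        exact List.isChain_cons_cons.mpr ⟨fun hx => hc (iv_eq_iff.mp hx), ih⟩

lemma reduce_length_le (w : W3) : (FreeGroup.reduce w).length ≤ w.length :=
  FreeGroup.Red.length_le FreeGroup.reduce.red

/-- the six "rotation" patterns: cyclic rotations of ABC and of (ABC)⁻¹. -/
def Rot : List (L3 × L3 × L3) :=
  let A : L3 := (0, true); let B : L3 := (1, true); let C : L3 := (2, true)
  [(A, B, C), (B, C, A), (C, A, B),
   (iv C, iv B, iv A), (iv B, iv A, iv C), (iv A, iv C, iv B)]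

/-- Noncrossing cover derivations with cost. -/
inductive D : W3 → ℕ → Prop
  | nil : D [] 0
  | append {v w : W3} {a b : ℕ} : D v a → D w b → D (v ++ w) (a + b)
  | single (x : L3) : D [x] 1
  | wrap (x : L3) {v : W3} {a : ℕ} : D v a → D ([x] ++ v ++ [iv x]) a
  | triple {ρ : L3 × L3 × L3} (hρ : ρ ∈ Rot) {v w : W3} {a b : ℕ} :
      D v a → D w b → D ([ρ.1] ++ v ++ [ρ.2.1] ++ w ++ [ρ.2.2]) (a + b + 1)

lemma D.cast {w w' : W3} {c : ℕ} (h : D w c) (e : w = w') : D w' c := e ▸ h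


/-- Extract the block containing the last letter of a derivation. -/
lemma extractLast : ∀ {w : W3} {c : ℕ}, D w c → ∀ {w' : W3} {x : L3}, w = w' ++ [x] →
    (∃ c', c' + 1 ≤ c ∧ D w' c') ∨
    (∃ U V cU cV, w' = U ++ [iv x] ++ V ∧ D U cU ∧ D V cV ∧ cU + cV ≤ c) ∨
    (∃ ρ, ρ ∈ Rot ∧ ρ.2.2 = x ∧ ∃ U V Wd cU cV cW,
      w' = U ++ [ρ.1] ++ V ++ [ρ.2.1] ++ Wd ∧ D U cU ∧ D V cV ∧ D Wd cW ∧
      cU + cV + cW + 1 ≤ c) := by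
  intro w c h
  induction h with
  | nil => intro w' x e; exact absurd e.symm (by simp)
  | single y =>
    intro w' x e
    rcases w' with _ | ⟨a, t⟩
    · obtain rfl : y = x := by simpa using e
      exact Or.inl ⟨0, le_rfl, D.nil⟩
    · exfalso
      have := congrArg List.length e
      simp at this
  | @append v u a b hv hu ihv ihu =>
    intro w' x e
    rcases List.eq_nil_or_concat u with rfl | ⟨u', x', hu'⟩
    · rw [List.append_nil] at e
      rcases ihv e with ⟨c', hc, hd⟩ | ⟨U, V, cU, cV, hw, hU, hV, hc⟩ |
          ⟨ρ, hρ, hx, U, V, Wd, cU, cV, cW, hw, hU, hV, hW, hc⟩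
      · exact Or.inl ⟨c', by omega, hd⟩
      · exact Or.inr (Or.inl ⟨U, V, cU, cV, hw, hU, hV, by omega⟩)
      · exact Or.inr (Or.inr ⟨ρ, hρ, hx, U, V, Wd, cU, cV, cW, hw, hU, hV, hW, by omega⟩)
    · rw [List.concat_eq_append] at hu'
      subst hu'
      rw [← List.append_assoc] at e
      have h2 := List.append_inj' e (by simp)
      obtain ⟨h2a, h2b⟩ := h2
      obtain rfl : x' = x := by simpa using h2b
      have hw' : w' = v ++ u' := h2a.symm
      rcases ihu (w' := u') (x := x') rfl with ⟨c', hc, hd⟩ |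
          ⟨U, V, cU, cV, hw, hU, hV, hc⟩ |
          ⟨ρ, hρ, hx, U, V, Wd, cU, cV, cW, hw, hU, hV, hW, hc⟩
      · exact Or.inl ⟨a + c', by omega, (hv.append hd).cast hw'.symm⟩
      · refine Or.inr (Or.inl ⟨v ++ U, V, a + cU, cV, ?_, hv.append hU, hV, by omega⟩)
        rw [hw', hw]; simp [List.append_assoc]
      · refine Or.inr (Or.inr ⟨ρ, hρ, hx, v ++ U, V, Wd, a + cU, cV, cW, ?_,
          hv.append hU, hV, hW, by omega⟩)
        rw [hw', hw]; simp [List.append_assoc]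
  | @wrap y v a hv _ =>
    intro w' x e
    have h2 := List.append_inj' e (by simp)
    obtain ⟨h2a, h2b⟩ := h2
    obtain rfl : iv y = x := by simpa using h2b
    refine Or.inr (Or.inl ⟨[], v, 0, a, ?_, D.nil, hv, by omega⟩)
    rw [← h2a]; simp
  | @triple ρ hρ v u a b hv hu _ _ =>
    intro w' x e
    have h2 := List.append_inj' e (by simp)
    obtain ⟨h2a, h2b⟩ := h2
    have hx : ρ.2.2 = x := by simpa using h2b
    refine Or.inr (Or.inr ⟨ρ, hρ, hx, [], v, u, 0, a, b, ?_, D.nil, hv, hu, by omega⟩)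
    rw [← h2a]; simp

/-- Extract the block containing the first letter of a derivation. -/
lemma extractFirst : ∀ {w : W3} {c : ℕ}, D w c → ∀ {w' : W3} {x : L3}, w = [x] ++ w' →
    (∃ c', c' + 1 ≤ c ∧ D w' c') ∨
    (∃ V U cV cU, w' = V ++ [iv x] ++ U ∧ D V cV ∧ D U cU ∧ cV + cU ≤ c) ∨
    (∃ ρ, ρ ∈ Rot ∧ ρ.1 = x ∧ ∃ V Wd U cV cW cU,
      w' = V ++ [ρ.2.1] ++ Wd ++ [ρ.2.2] ++ U ∧ D V cV ∧ D Wd cW ∧ D U cU ∧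
      cV + cW + cU + 1 ≤ c) := by
  intro w c h
  induction h with
  | nil => intro w' x e; exact absurd e.symm (by simp)
  | single y =>
    intro w' x e
    obtain ⟨rfl, rfl⟩ : y = x ∧ w' = [] := by
      rw [List.singleton_append] at e
      exact ⟨by simpa using congrArg List.head? e, by simpa using congrArg List.tail e⟩
    exact Or.inl ⟨0, le_rfl, D.nil⟩
  | @append v u a b hv hu ihv ihu =>
    intro w' x e
    rcases v with _ | ⟨v0, v'⟩
    · rw [List.nil_append] at e
      rcases ihu e with ⟨c', hc, hd⟩ | ⟨V, U, cV, cU, hw, hV, hU, hc⟩ |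
          ⟨ρ, hρ, hx, V, Wd, U, cV, cW, cU, hw, hV, hW, hU, hc⟩
      · exact Or.inl ⟨c', by omega, hd⟩
      · exact Or.inr (Or.inl ⟨V, U, cV, cU, hw, hV, hU, by omega⟩)
      · exact Or.inr (Or.inr ⟨ρ, hρ, hx, V, Wd, U, cV, cW, cU, hw, hV, hW, hU, by omega⟩)
    · obtain rfl : v0 = x := by simpa using congrArg List.head? e
      have hw' : w' = v' ++ u := (show v' ++ u = w' by simpa using congrArg List.tail e).symm
      rcases ihv (w' := v') (x := v0) rfl with ⟨c', hc, hd⟩ |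
          ⟨V, U, cV, cU, hw, hV, hU, hc⟩ |
          ⟨ρ, hρ, hx, V, Wd, U, cV, cW, cU, hw, hV, hW, hU, hc⟩
      · exact Or.inl ⟨c' + b, by omega, (hd.append hu).cast hw'.symm⟩
      · refine Or.inr (Or.inl ⟨V, U ++ u, cV, cU + b, ?_, hV, hU.append hu, by omega⟩)
        rw [hw', hw]; simp [List.append_assoc]
      · refine Or.inr (Or.inr ⟨ρ, hρ, hx, V, Wd, U ++ u, cV, cW, cU + b, ?_,
          hV, hW, hU.append hu, by omega⟩)
        rw [hw', hw]; simp [List.append_assoc]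
  | @wrap y v a hv _ =>
    intro w' x e
    obtain rfl : y = x := by simpa using congrArg List.head? e
    have hw' : w' = v ++ [iv y] := (show v ++ [iv y] = w' by simpa using congrArg List.tail e).symm
    exact Or.inr (Or.inl ⟨v, [], a, 0, by simpa using hw', hv, D.nil, by omega⟩)
  | @triple ρ hρ v u a b hv hu _ _ =>
    intro w' x e
    have hy : ρ.1 = x := by simpa using congrArg List.head? e
    have hw' : w' = v ++ [ρ.2.1] ++ u ++ [ρ.2.2] := by
      have := congrArg List.tail e
      simpa [List.append_assoc] using this.symm
    exact Or.inr (Or.inr ⟨ρ, hρ, hy, v, u, [], a, b, 0, by simpa using hw',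
      hv, hu, D.nil, by omega⟩)

/-- Removing the first letter of a derivable word costs at most 1. -/
lemma removeFirst {w w' : W3} {x : L3} {c : ℕ} (h : D w c) (e : w = [x] ++ w') :
    ∃ c' ≤ c + 1, D w' c' := by
  rcases extractFirst h e with ⟨c', hc, hd⟩ | ⟨V, U, cV, cU, hw, hV, hU, hc⟩ |
      ⟨ρ, hρ, hx, V, Wd, U, cV, cW, cU, hw, hV, hW, hU, hc⟩
  · exact ⟨c', by omega, hd⟩
  · exact ⟨cV + 1 + cU, by omega, ((hV.append (D.single _)).append hU).cast (by rw [hw])⟩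
  · exact ⟨cV + 1 + cW + 1 + cU, by omega,
      ((((hV.append (D.single _)).append hW).append (D.single _)).append hU).cast
        (by rw [hw])⟩

/-- Removing the last letter of a derivable word costs at most 1. -/
lemma removeLast {w w' : W3} {x : L3} {c : ℕ} (h : D w c) (e : w = w' ++ [x]) :
    ∃ c' ≤ c + 1, D w' c' := by
  rcases extractLast h e with ⟨c', hc, hd⟩ | ⟨U, V, cU, cV, hw, hU, hV, hc⟩ |
      ⟨ρ, hρ, hx, U, V, Wd, cU, cV, cW, hw, hU, hV, hW, hc⟩
  · exact ⟨c', by omega, hd⟩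
  · exact ⟨cU + 1 + cV, by omega, ((hU.append (D.single _)).append hV).cast (by rw [hw])⟩
  · exact ⟨cU + 1 + cV + 1 + cW, by omega,
      ((((hU.append (D.single _)).append hV).append (D.single _)).append hW).cast
        (by rw [hw])⟩

/-! ### Rotation pattern lemmas -/

set_option maxRecDepth 10000 in
lemma rot_cyclic : ∀ ρ ∈ Rot, (ρ.2.1, ρ.2.2, ρ.1) ∈ Rot := by decide

set_option maxRecDepth 10000 in
lemma rot_R1 : ∀ ρ ∈ Rot, ∀ σ ∈ Rot, σ.1 = iv ρ.2.2 →
    σ.2.1 = iv ρ.2.1 ∧ σ.2.2 = iv ρ.1 := by decide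

set_option maxRecDepth 10000 in
lemma rot_R2 : ∀ ρ ∈ Rot, ∀ σ ∈ Rot, σ.2.2 = iv ρ.2.1 →
    σ.1 = iv ρ.1 ∧ σ.2.1 = iv ρ.2.2 := by decide

set_option maxRecDepth 10000 in
lemma rot_R3 : ∀ ρ ∈ Rot, ∀ σ ∈ Rot, σ.1 = iv ρ.2.1 →
    σ.2.1 = iv ρ.1 ∧ σ.2.2 = iv ρ.2.2 := by decide

set_option maxRecDepth 10000 in
lemma rot_R4 : ∀ ρ ∈ Rot, ∀ σ ∈ Rot, σ.2.2 = iv ρ.2.2 →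
    σ.1 = iv ρ.2.1 ∧ σ.2.1 = iv ρ.1 := by decide

set_option maxRecDepth 10000 in
lemma rot_R5 : ∀ ρ ∈ Rot, ∀ σ ∈ Rot, σ.1 = iv ρ.1 →
    σ.2.1 = iv ρ.2.2 ∧ σ.2.2 = iv ρ.2.1 := by decide

set_option maxRecDepth 10000 in
lemma rot_nocancel : ∀ ρ ∈ Rot, ρ.1 ≠ iv ρ.2.1 ∧ ρ.2.1 ≠ iv ρ.2.2 ∧ ρ.1 ≠ iv ρ.2.2 := by decide

/-! ### the cost predicate on group elements -/

def Nu (g : FreeGroup (Fin 3)) (c : ℕ) : Prop := D g.toWord c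

lemma redW_toWord (g : FreeGroup (Fin 3)) : RedW g.toWord := by
  obtain ⟨w, rfl⟩ : ∃ w, g = FreeGroup.mk w := ⟨g.toWord, FreeGroup.mk_toWord.symm⟩
  rw [FreeGroup.toWord_mk]
  exact redW_reduce w

lemma nu_mk {w : W3} {c : ℕ} (hw : RedW w) (h : D w c) : Nu (FreeGroup.mk w) c := by
  unfold Nu
  rw [FreeGroup.toWord_mk, reduce_self_of_redW hw]
  exact h

lemma nu_one : Nu 1 0 := by
  unfold Nu; rw [FreeGroup.toWord_one]; exact D.nil

lemma nu_letter (x : L3) : Nu (FreeGroup.mk [x]) 1 := nu_mk (RedW.single x) (D.single x)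

lemma mk_singleton_inv (x : L3) : (FreeGroup.mk [x])⁻¹ = FreeGroup.mk [iv x] := by
  rw [FreeGroup.inv_mk]
  have : FreeGroup.invRev [x] = [iv x] := by simp [FreeGroup.invRev, iv]
  rw [this]

lemma mul_singleton_cancel (x : L3) : FreeGroup.mk [x] * FreeGroup.mk [iv x] = 1 := by
  rw [← mk_singleton_inv]; exact mul_inv_cancel _

lemma mul_eq_mk (g h : FreeGroup (Fin 3)) :
    g * h = FreeGroup.mk (g.toWord ++ h.toWord) := by
  rw [← FreeGroup.mul_mk, FreeGroup.mk_toWord, FreeGroup.mk_toWord]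

lemma toWord_mul (g h : FreeGroup (Fin 3)) :
    (g * h).toWord = FreeGroup.reduce (g.toWord ++ h.toWord) := by
  rw [mul_eq_mk, FreeGroup.toWord_mk]

lemma toWord_length_mul (g h : FreeGroup (Fin 3)) :
    (g * h).toWord.length ≤ g.toWord.length + h.toWord.length := by
  rw [toWord_mul]
  calc (FreeGroup.reduce (g.toWord ++ h.toWord)).length ≤ (g.toWord ++ h.toWord).length :=
        reduce_length_le _
    _ = g.toWord.length + h.toWord.length := by simp

lemma toWord_mk_length_le (w : W3) : (FreeGroup.mk w).toWord.length ≤ w.length := by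
  rw [FreeGroup.toWord_mk]; exact reduce_length_le w

lemma toWord_mk_length_eq {w : W3} (hw : RedW w) : (FreeGroup.mk w).toWord.length = w.length := by
  rw [FreeGroup.toWord_mk, reduce_self_of_redW hw]

/-! ### NuLe: cost bounded derivation of a group element -/

open FreeGroup

def NuLe (g : FreeGroup (Fin 3)) (c : ℕ) : Prop := ∃ c' ≤ c, Nu g c'

lemma NuLe.mono {g : FreeGroup (Fin 3)} {c d : ℕ} (h : NuLe g c) (hcd : c ≤ d) : NuLe g d := by
  obtain ⟨c', hc, hg⟩ := h; exact ⟨c', hc.trans hcd, hg⟩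

lemma NuLe.congr {g h : FreeGroup (Fin 3)} {c : ℕ} (hg : NuLe g c) (e : g = h) : NuLe h c :=
  e ▸ hg

lemma nuLe_mk {w : W3} {c : ℕ} (hw : RedW w) (h : D w c) : NuLe (mk w) c :=
  ⟨c, le_rfl, nu_mk hw h⟩

lemma nuLe_one : NuLe 1 0 := ⟨0, le_rfl, nu_one⟩

lemma nuLe_letter (x : L3) : NuLe (mk [x]) 1 := ⟨1, le_rfl, nu_letter x⟩

lemma size_letter (x : L3) : (mk [x]).toWord.length = 1 :=
  toWord_mk_length_eq (RedW.single x)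

lemma size_conj_le (x : L3) (g : FreeGroup (Fin 3)) (y : L3) :
    (mk [x] * g * mk [y]).toWord.length ≤ g.toWord.length + 2 := by
  have h1 := toWord_length_mul (mk [x] * g) (mk [y])
  have h2 := toWord_length_mul (mk [x]) g
  have h3 := size_letter x
  have h4 := size_letter y
  omega

lemma size_tri_le (x y z : L3) (g h : FreeGroup (Fin 3)) :
    (mk [x] * g * mk [y] * h * mk [z]).toWord.length ≤
      g.toWord.length + h.toWord.length + 3 := by
  have h1 := toWord_length_mul (mk [x] * g * mk [y] * h) (mk [z])
  have h2 := toWord_length_mul (mk [x] * g * mk [y]) h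
  have h3 := size_conj_le x g y
  have h4 := size_letter z
  omega

/-! ### Reduced-word assembly helpers -/

lemma redW_cons {x : L3} {w : W3} (hw : RedW w) (h : ∀ z ∈ w.head?, x ≠ iv z) :
    RedW (x :: w) :=
  List.isChain_cons.mpr ⟨h, hw⟩

lemma redW_concat {x : L3} {w : W3} (hw : RedW w) (h : ∀ z ∈ w.getLast?, z ≠ iv x) :
    RedW (w ++ [x]) :=
  List.IsChain.append hw (RedW.single x) (by simpa using h)

/-- assemble a reduced `[ρ₀] ++ v ++ [ρ₁] ++ w ++ [ρ₂]`. -/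
lemma redW_five {ρ : L3 × L3 × L3} (hρ : ρ ∈ Rot) {v w : W3} (hv : RedW v) (hw : RedW w)
    (c1 : ∀ z ∈ v.head?, ρ.1 ≠ iv z) (c2 : ∀ z ∈ v.getLast?, z ≠ iv ρ.2.1)
    (c3 : ∀ z ∈ w.head?, ρ.2.1 ≠ iv z) (c4 : ∀ z ∈ w.getLast?, z ≠ iv ρ.2.2) :
    RedW ([ρ.1] ++ v ++ [ρ.2.1] ++ w ++ [ρ.2.2]) := by
  obtain ⟨n1, n2, n3⟩ := rot_nocancel ρ hρ
  have i1 : RedW (w ++ [ρ.2.2]) := redW_concat hw c4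
  have i2 : RedW (ρ.2.1 :: (w ++ [ρ.2.2])) := by
    refine redW_cons i1 ?_
    rcases w with _ | ⟨w0, w'⟩
    · intro z hz; simp at hz; subst hz; exact n2
    · intro z hz; simp at hz; subst hz; exact c3 w0 (by simp)
  have i3 : RedW (v ++ ρ.2.1 :: (w ++ [ρ.2.2])) := by
    refine List.IsChain.append hv i2 ?_
    intro p hp q hq
    simp only [List.head?_cons, Option.mem_some_iff] at hq
    subst hq
    exact c2 p hp
  have i4 : RedW (ρ.1 :: (v ++ ρ.2.1 :: (w ++ [ρ.2.2]))) := by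
    refine redW_cons i3 ?_
    rcases v with _ | ⟨v0, v'⟩
    · intro z hz; simp at hz; subst hz; exact n1
    · intro z hz; simp at hz; subst hz; exact c1 v0 (by simp)
  have : ρ.1 :: (v ++ ρ.2.1 :: (w ++ [ρ.2.2])) = [ρ.1] ++ v ++ [ρ.2.1] ++ w ++ [ρ.2.2] := by
    simp
  rwa [this] at i4

/-! ### The core mutual induction -/

def MultS (N : ℕ) : Prop := ∀ P Q a b, P.length + Q.length ≤ N → RedW P → RedW Q →
    D P a → D Q b → NuLe (mk P * mk Q) (a + b)

def ConjS (N : ℕ) : Prop := ∀ (x : L3), ∀ h a, h.length + 2 ≤ N → RedW h → D h a →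
    NuLe (mk [x] * mk h * mk [iv x]) a

def TriS (N : ℕ) : Prop := ∀ ρ ∈ Rot, ∀ v w a b, v.length + w.length + 3 ≤ N →
    RedW v → RedW w → D v a → D w b →
    NuLe (mk [ρ.1] * mk v * mk [ρ.2.1] * mk w * mk [ρ.2.2]) (a + b + 1)

theorem core : ∀ N, MultS N ∧ ConjS N ∧ TriS N := by
  intro N
  induction N using Nat.strong_induction_on with
  | _ N IH =>
  -- group-element-level recursive interfaces
  have nuMul : ∀ g h : FreeGroup (Fin 3), ∀ a b, g.toWord.length + h.toWord.length < N →
      NuLe g a → NuLe h b → NuLe (g * h) (a + b) := by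
    intro g h a b hlen ⟨a', ha, hg⟩ ⟨b', hb, hh⟩
    have H := (IH _ hlen).1 g.toWord h.toWord a' b' le_rfl (redW_toWord g) (redW_toWord h) hg hh
    rw [mk_toWord, mk_toWord] at H
    exact H.mono (by omega)
  have nuConj : ∀ (x : L3), ∀ g : FreeGroup (Fin 3), ∀ a, g.toWord.length + 2 < N →
      NuLe g a → NuLe (mk [x] * g * mk [iv x]) a := by
    intro x g a hlen ⟨a', ha, hg⟩
    have H := (IH _ hlen).2.1 x g.toWord a' le_rfl (redW_toWord g) hg
    rw [mk_toWord] at H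
    exact H.mono ha
  have nuTri : ∀ ρ ∈ Rot, ∀ g h : FreeGroup (Fin 3), ∀ a b,
      g.toWord.length + h.toWord.length + 3 < N → NuLe g a → NuLe h b →
      NuLe (mk [ρ.1] * g * mk [ρ.2.1] * h * mk [ρ.2.2]) (a + b + 1) := by
    intro ρ hρ g h a b hlen ⟨a', ha, hg⟩ ⟨b', hb, hh⟩
    have H := (IH _ hlen).2.2 ρ hρ g.toWord h.toWord a' b' le_rfl (redW_toWord g)
      (redW_toWord h) hg hh
    rw [mk_toWord, mk_toWord] at H
    exact H.mono (by omega)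
  refine ⟨?_, ?_, ?_⟩
  · -- MultS
    intro P Q a b hlen hP hQ hdP hdQ
    rcases List.eq_nil_or_concat P with rfl | ⟨P', x, hPx⟩
    · exact ((nuLe_mk hQ hdQ).congr (by rw [mul_mk]; rfl)).mono (by omega)
    rw [List.concat_eq_append] at hPx
    subst hPx
    rcases Q with _ | ⟨y, Q'⟩
    · exact ((nuLe_mk hP hdP).congr (by rw [mul_mk, List.append_nil])).mono (by omega)
    simp at hlen
    by_cases hxy : y = iv x
    case neg =>
      -- no cancellation at the seam
      have hred : RedW ((P' ++ [x]) ++ (y :: Q')) := by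
        refine List.IsChain.append hP hQ ?_
        intro p hp q hq
        simp only [List.getLast?_append, List.getLast?_singleton, Option.or_some, Option.some_or,
          Option.mem_some_iff] at hp
        simp only [List.head?_cons, Option.mem_some_iff] at hq
        subst hp; subst hq
        intro hcon
        exact hxy (by rw [hcon, iv_iv])
      exact (nuLe_mk hred ((hdP.append hdQ))).congr (by rw [mul_mk])
    case pos =>
      subst hxy
      have hP'r : RedW P' := (RedW.split hP).1
      have hQ'r : RedW Q' := hQ.tail
      have Ecancel : mk (P' ++ [x]) * mk (iv x :: Q') = mk P' * mk Q' := by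
        rw [mul_mk, mul_mk]
        refine Quot.sound ?_
        have := @FreeGroup.Red.Step.not (Fin 3) P' Q' x.1 x.2
        simpa [iv, List.append_assoc] using this
      rcases extractLast hdP rfl with ⟨a', ha', hdP'⟩ | hPP'
      · -- last block of P is a singleton
        obtain ⟨b', hb', hdQ'⟩ := removeFirst hdQ rfl
        have := nuMul (mk P') (mk Q') a' b'
          (by rw [toWord_mk_length_eq hP'r, toWord_mk_length_eq hQ'r]; omega)
          (nuLe_mk hP'r hdP') (nuLe_mk hQ'r hdQ')
        exact (this.congr Ecancel.symm).mono (by omega)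
      · rcases extractFirst hdQ rfl with ⟨b', hb', hdQ'⟩ | hQQ'
        · -- first block of Q is a singleton
          obtain ⟨a', ha', hdP'⟩ := removeLast hdP rfl
          have := nuMul (mk P') (mk Q') a' b'
            (by rw [toWord_mk_length_eq hP'r, toWord_mk_length_eq hQ'r]; omega)
            (nuLe_mk hP'r hdP') (nuLe_mk hQ'r hdQ')
          exact (this.congr Ecancel.symm).mono (by omega)
        rcases hPP' with hPP | hTP
        · rcases hQQ' with hPQ | hTQ
          · -- pair / pair
            obtain ⟨U, V, cU, cV, hPdec, hU, hV, hc⟩ := hPP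
            obtain ⟨V', U', cV', cU', hQdec, hV', hU', hc'⟩ := hPQ
            rw [iv_iv] at hQdec
            have hUr : RedW U := (RedW.split ((RedW.split (hPdec ▸ hP'r : RedW _)).1)).1
            have hVr : RedW V := (RedW.split (hPdec ▸ hP'r : RedW _)).2
            have hV'r : RedW V' := (RedW.split ((RedW.split (hQdec ▸ hQ'r : RedW _)).1)).1
            have hU'r : RedW U' := (RedW.split (hQdec ▸ hQ'r : RedW _)).2
            have lP : P'.length = U.length + 1 + V.length := by rw [hPdec]; simp; try omega
            have lQ : Q'.length = V'.length + 1 + U'.length := by rw [hQdec]; simp; try omega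
            have c1 := nuMul (mk V) (mk V') cV cV'
              (by rw [toWord_mk_length_eq hVr, toWord_mk_length_eq hV'r]; omega)
              (nuLe_mk hVr hV) (nuLe_mk hV'r hV')
            have s1 : (mk V * mk V').toWord.length ≤ V.length + V'.length := by
              have := toWord_length_mul (mk V) (mk V')
              rw [toWord_mk_length_eq hVr, toWord_mk_length_eq hV'r] at this
              exact this
            have c2 := nuConj (iv x) (mk V * mk V') (cV + cV') (by omega) c1
            rw [iv_iv] at c2
            have s2 := size_conj_le (iv x) (mk V * mk V') x
            have c3 := nuMul (mk U) _ cU (cV + cV')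
              (by rw [toWord_mk_length_eq hUr]; omega) (nuLe_mk hUr hU) c2
            have s3 := toWord_length_mul (mk U) (mk [iv x] * (mk V * mk V') * mk [x])
            have c4 := nuMul _ (mk U') (cU + (cV + cV')) cU'
              (by rw [toWord_mk_length_eq hU'r]
                  rw [toWord_mk_length_eq hUr] at s3; omega)
              c3 (nuLe_mk hU'r hU')
            refine (c4.congr ?_).mono (by omega)
            rw [show (iv x :: Q') = [iv x] ++ Q' from rfl, hPdec, hQdec]
            simp only [← FreeGroup.mul_mk]
            rw [← mk_singleton_inv]
            group
          · -- pair / triple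
            obtain ⟨U, V, cU, cV, hPdec, hU, hV, hc⟩ := hPP
            obtain ⟨σ, hσ, hσx, W₁, W₂, U₁, cW₁, cW₂, cU₁, hQdec, hW₁, hW₂, hU₁, hc'⟩ := hTQ
            have hUr : RedW U := (RedW.split ((RedW.split (hPdec ▸ hP'r : RedW _)).1)).1
            have hVr : RedW V := (RedW.split (hPdec ▸ hP'r : RedW _)).2
            have hW₁r : RedW W₁ :=
              (RedW.split ((RedW.split ((RedW.split ((RedW.split
                (hQdec ▸ hQ'r : RedW _)).1)).1)).1)).1
            have hW₂r : RedW W₂ :=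
              (RedW.split ((RedW.split ((RedW.split (hQdec ▸ hQ'r : RedW _)).1)).1)).2
            have hU₁r : RedW U₁ := (RedW.split (hQdec ▸ hQ'r : RedW _)).2
            have lP : P'.length = U.length + 1 + V.length := by rw [hPdec]; simp; try omega
            have lQ : Q'.length = W₁.length + W₂.length + U₁.length + 2 := by
              rw [hQdec]; simp; try omega
            have c1 := nuMul (mk V) (mk W₁) cV cW₁
              (by rw [toWord_mk_length_eq hVr, toWord_mk_length_eq hW₁r]; omega)
              (nuLe_mk hVr hV) (nuLe_mk hW₁r hW₁)
            have s1 : (mk V * mk W₁).toWord.length ≤ V.length + W₁.length := by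
              have := toWord_length_mul (mk V) (mk W₁)
              rw [toWord_mk_length_eq hVr, toWord_mk_length_eq hW₁r] at this
              exact this
            have c2 := nuTri σ hσ (mk V * mk W₁) (mk W₂) (cV + cW₁) cW₂
              (by rw [toWord_mk_length_eq hW₂r]; omega) c1 (nuLe_mk hW₂r hW₂)
            have s2 := size_tri_le σ.1 σ.2.1 σ.2.2 (mk V * mk W₁) (mk W₂)
            have sW2 : (mk W₂).toWord.length = W₂.length := toWord_mk_length_eq hW₂r
            have c3 := nuMul (mk U) _ cU (cV + cW₁ + cW₂ + 1)
              (by rw [toWord_mk_length_eq hUr]; omega)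
              (nuLe_mk hUr hU) c2
            have s3 := toWord_length_mul (mk U)
              (mk [σ.1] * (mk V * mk W₁) * mk [σ.2.1] * mk W₂ * mk [σ.2.2])
            have sU : (mk U).toWord.length = U.length := toWord_mk_length_eq hUr
            have c4 := nuMul _ (mk U₁) _ cU₁
              (by rw [toWord_mk_length_eq hU₁r]; omega)
              c3 (nuLe_mk hU₁r hU₁)
            refine (c4.congr ?_).mono (by omega)
            rw [show (iv x :: Q') = [iv x] ++ Q' from rfl, hPdec, hQdec, hσx]
            simp only [← FreeGroup.mul_mk]
            rw [← mk_singleton_inv]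
            group
        · rcases hQQ' with hPQ | hTQ
          · -- triple / pair
            obtain ⟨ρ, hρ, hρx, U, V, Wd, cU, cV, cW, hPdec, hU, hV, hW, hc⟩ := hTP
            obtain ⟨V', U', cV', cU', hQdec, hV', hU', hc'⟩ := hPQ
            rw [iv_iv] at hQdec
            have hUr : RedW U :=
              (RedW.split ((RedW.split ((RedW.split ((RedW.split
                (hPdec ▸ hP'r : RedW _)).1)).1)).1)).1
            have hVr : RedW V :=
              (RedW.split ((RedW.split ((RedW.split (hPdec ▸ hP'r : RedW _)).1)).1)).2
            have hWr : RedW Wd := (RedW.split (hPdec ▸ hP'r : RedW _)).2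
            have hV'r : RedW V' := (RedW.split ((RedW.split (hQdec ▸ hQ'r : RedW _)).1)).1
            have hU'r : RedW U' := (RedW.split (hQdec ▸ hQ'r : RedW _)).2
            have lP : P'.length = U.length + V.length + Wd.length + 2 := by
              rw [hPdec]; simp; try omega
            have lQ : Q'.length = V'.length + 1 + U'.length := by rw [hQdec]; simp; try omega
            have c1 := nuMul (mk Wd) (mk V') cW cV'
              (by rw [toWord_mk_length_eq hWr, toWord_mk_length_eq hV'r]; omega)
              (nuLe_mk hWr hW) (nuLe_mk hV'r hV')
            have s1 : (mk Wd * mk V').toWord.length ≤ Wd.length + V'.length := by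
              have := toWord_length_mul (mk Wd) (mk V')
              rw [toWord_mk_length_eq hWr, toWord_mk_length_eq hV'r] at this
              exact this
            have c2 := nuTri ρ hρ (mk V) (mk Wd * mk V') cV (cW + cV')
              (by rw [toWord_mk_length_eq hVr]; omega) (nuLe_mk hVr hV) c1
            have s2 := size_tri_le ρ.1 ρ.2.1 ρ.2.2 (mk V) (mk Wd * mk V')
            have sV : (mk V).toWord.length = V.length := toWord_mk_length_eq hVr
            have c3 := nuMul (mk U) _ cU (cV + (cW + cV') + 1)
              (by rw [toWord_mk_length_eq hUr]; omega)
              (nuLe_mk hUr hU) c2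
            have s3 := toWord_length_mul (mk U)
              (mk [ρ.1] * mk V * mk [ρ.2.1] * (mk Wd * mk V') * mk [ρ.2.2])
            have sU : (mk U).toWord.length = U.length := toWord_mk_length_eq hUr
            have c4 := nuMul _ (mk U') _ cU'
              (by rw [toWord_mk_length_eq hU'r]; omega)
              c3 (nuLe_mk hU'r hU')
            refine (c4.congr ?_).mono (by omega)
            rw [show (iv x :: Q') = [iv x] ++ Q' from rfl, hPdec, hQdec, ← hρx]
            simp only [← FreeGroup.mul_mk]
            rw [← mk_singleton_inv]
            group
          · -- triple / triple
            obtain ⟨ρ, hρ, hρx, U, V, Wd, cU, cV, cW, hPdec, hU, hV, hW, hc⟩ := hTP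
            obtain ⟨σ, hσ, hσx, W₁, W₂, U₁, cW₁, cW₂, cU₁, hQdec, hW₁, hW₂, hU₁, hc'⟩ := hTQ
            have hres := rot_R1 ρ hρ σ hσ (by rw [hσx, hρx])
            obtain ⟨hres1, hres2⟩ := hres
            have hUr : RedW U :=
              (RedW.split ((RedW.split ((RedW.split ((RedW.split
                (hPdec ▸ hP'r : RedW _)).1)).1)).1)).1
            have hVr : RedW V :=
              (RedW.split ((RedW.split ((RedW.split (hPdec ▸ hP'r : RedW _)).1)).1)).2
            have hWr : RedW Wd := (RedW.split (hPdec ▸ hP'r : RedW _)).2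
            have hW₁r : RedW W₁ :=
              (RedW.split ((RedW.split ((RedW.split ((RedW.split
                (hQdec ▸ hQ'r : RedW _)).1)).1)).1)).1
            have hW₂r : RedW W₂ :=
              (RedW.split ((RedW.split ((RedW.split (hQdec ▸ hQ'r : RedW _)).1)).1)).2
            have hU₁r : RedW U₁ := (RedW.split (hQdec ▸ hQ'r : RedW _)).2
            have lP : P'.length = U.length + V.length + Wd.length + 2 := by
              rw [hPdec]; simp; try omega
            have lQ : Q'.length = W₁.length + W₂.length + U₁.length + 2 := by
              rw [hQdec]; simp; try omega
            have c1 := nuMul (mk Wd) (mk W₁) cW cW₁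
              (by rw [toWord_mk_length_eq hWr, toWord_mk_length_eq hW₁r]; omega)
              (nuLe_mk hWr hW) (nuLe_mk hW₁r hW₁)
            have s1 : (mk Wd * mk W₁).toWord.length ≤ Wd.length + W₁.length := by
              have := toWord_length_mul (mk Wd) (mk W₁)
              rw [toWord_mk_length_eq hWr, toWord_mk_length_eq hW₁r] at this
              exact this
            have c2 := nuConj ρ.2.1 (mk Wd * mk W₁) (cW + cW₁) (by omega) c1
            have s2 := size_conj_le ρ.2.1 (mk Wd * mk W₁) (iv ρ.2.1)
            have sV : (mk V).toWord.length = V.length := toWord_mk_length_eq hVr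
            have c3 := nuMul (mk V) _ cV (cW + cW₁) (by omega) (nuLe_mk hVr hV) c2
            have s3 := toWord_length_mul (mk V) (mk [ρ.2.1] * (mk Wd * mk W₁) * mk [iv ρ.2.1])
            have sW2 : (mk W₂).toWord.length = W₂.length := toWord_mk_length_eq hW₂r
            have c4 := nuMul _ (mk W₂) (cV + (cW + cW₁)) cW₂ (by omega) c3 (nuLe_mk hW₂r hW₂)
            have s4 := toWord_length_mul (mk V * (mk [ρ.2.1] * (mk Wd * mk W₁) * mk [iv ρ.2.1]))
              (mk W₂)
            have c5 := nuConj ρ.1 _ (cV + (cW + cW₁) + cW₂) (by omega) c4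
            have s5 := size_conj_le ρ.1
              (mk V * (mk [ρ.2.1] * (mk Wd * mk W₁) * mk [iv ρ.2.1]) * mk W₂) (iv ρ.1)
            have sU : (mk U).toWord.length = U.length := toWord_mk_length_eq hUr
            have c6 := nuMul (mk U) _ cU (cV + (cW + cW₁) + cW₂) (by omega) (nuLe_mk hUr hU) c5
            have s6 := toWord_length_mul (mk U)
              (mk [ρ.1] * (mk V * (mk [ρ.2.1] * (mk Wd * mk W₁) * mk [iv ρ.2.1]) * mk W₂) *
                mk [iv ρ.1])
            have sU1 : (mk U₁).toWord.length = U₁.length := toWord_mk_length_eq hU₁r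
            have c7 := nuMul _ (mk U₁) _ cU₁ (by omega) c6 (nuLe_mk hU₁r hU₁)
            refine (c7.congr ?_).mono (by omega)
            rw [show (iv x :: Q') = [iv x] ++ Q' from rfl, hPdec, hQdec, hres1, hres2,
              ← hρx]
            simp only [← FreeGroup.mul_mk]
            rw [← mk_singleton_inv, ← mk_singleton_inv, ← mk_singleton_inv]
            group
  · -- ConjS
    intro x h a hlen hh hdh
    rcases h with _ | ⟨h0, ht⟩
    · have E : (1 : FreeGroup (Fin 3)) = mk [x] * mk ([] : W3) * mk [iv x] := by
        rw [mul_mk, mul_mk]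
        have := mul_singleton_cancel x
        rw [mul_mk] at this
        simpa using this.symm
      exact (nuLe_one.congr E).mono (Nat.zero_le a)
    · simp only [List.length_cons] at hlen
      by_cases hc1 : h0 = iv x
      · subst hc1
        have htr : RedW ht := hh.tail
        rcases extractFirst hdh (w' := ht) (x := iv x) rfl with ⟨a', ha', hd'⟩ | hPQ | hTQ
        · have c1 := nuMul (mk ht) (mk [iv x]) a' 1
            (by rw [toWord_mk_length_eq htr, size_letter]; omega)
            (nuLe_mk htr hd') (nuLe_letter _)
          refine (c1.congr ?_).mono (by omega)
          rw [show ((iv x :: ht : W3)) = [iv x] ++ ht from rfl]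
          simp only [← FreeGroup.mul_mk]
          rw [← mk_singleton_inv]
          group
        · obtain ⟨V, U, cV, cU, hdec, hV, hU, hcc⟩ := hPQ
          rw [iv_iv] at hdec
          have hVr : RedW V := (RedW.split ((RedW.split (hdec ▸ htr : RedW _)).1)).1
          have hUr : RedW U := (RedW.split (hdec ▸ htr : RedW _)).2
          have lt : ht.length = V.length + 1 + U.length := by rw [hdec]; simp; try omega
          have sU : (mk U).toWord.length = U.length := toWord_mk_length_eq hUr
          have sV : (mk V).toWord.length = V.length := toWord_mk_length_eq hVr
          have c1 := nuConj x (mk U) cU (by omega) (nuLe_mk hUr hU)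
          have s1 := size_conj_le x (mk U) (iv x)
          have c2 := nuMul (mk V) _ cV cU (by omega) (nuLe_mk hVr hV) c1
          refine (c2.congr ?_).mono (by omega)
          rw [show ((iv x :: ht : W3)) = [iv x] ++ ht from rfl, hdec]
          simp only [← FreeGroup.mul_mk]
          rw [← mk_singleton_inv]
          group
        · obtain ⟨σ, hσ, hσx, V, Wd, U, cV, cW, cU, hdec, hV, hW, hU, hcc⟩ := hTQ
          have hVr : RedW V :=
            (RedW.split ((RedW.split ((RedW.split ((RedW.split
              (hdec ▸ htr : RedW _)).1)).1)).1)).1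
          have hWr : RedW Wd :=
            (RedW.split ((RedW.split ((RedW.split (hdec ▸ htr : RedW _)).1)).1)).2
          have hUr : RedW U := (RedW.split (hdec ▸ htr : RedW _)).2
          have lt : ht.length = V.length + Wd.length + U.length + 2 := by
            rw [hdec]; simp; try omega
          have sU : (mk U).toWord.length = U.length := toWord_mk_length_eq hUr
          have sV : (mk V).toWord.length = V.length := toWord_mk_length_eq hVr
          have sW : (mk Wd).toWord.length = Wd.length := toWord_mk_length_eq hWr
          have τmem := rot_cyclic σ hσ
          have c1 := nuTri _ τmem (mk Wd) (mk U) cW cU (by omega)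
            (nuLe_mk hWr hW) (nuLe_mk hUr hU)
          dsimp only at c1
          have s1 := size_tri_le σ.2.1 σ.2.2 σ.1 (mk Wd) (mk U)
          have c2 := nuMul (mk V) _ cV (cW + cU + 1) (by omega) (nuLe_mk hVr hV) c1
          refine (c2.congr ?_).mono (by omega)
          rw [show ((iv x :: ht : W3)) = [iv x] ++ ht from rfl, hdec, hσx]
          simp only [← FreeGroup.mul_mk]
          rw [← mk_singleton_inv]
          group
      · obtain ⟨h', hl, hhl⟩ : ∃ h' hl, (h0 :: ht : W3) = h' ++ [hl] := by
          rcases List.eq_nil_or_concat (h0 :: ht : W3) with he | ⟨h', hl, he⟩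
          · simp at he
          · exact ⟨h', hl, by simpa [List.concat_eq_append] using he⟩
        have lh : ht.length + 1 = h'.length + 1 := by
          have := congrArg List.length hhl; simpa using this
        by_cases hc2 : hl = x
        · subst hl
          rcases extractLast hdh hhl with ⟨a', ha', hd'⟩ | hPP | hTP
          · have hr' : RedW h' := (RedW.split (hhl ▸ hh : RedW _)).1
            have c1 := nuMul (mk [x]) (mk h') 1 a'
              (by rw [toWord_mk_length_eq hr', size_letter]; omega)
              (nuLe_letter _) (nuLe_mk hr' hd')
            refine (c1.congr ?_).mono (by omega)
            rw [hhl]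
            simp only [← FreeGroup.mul_mk]
            rw [← mk_singleton_inv]
            group
          · obtain ⟨U, V, cU, cV, hdec, hU, hV, hcc⟩ := hPP
            have hr' : RedW h' := (RedW.split (hhl ▸ hh : RedW _)).1
            have hUr : RedW U := (RedW.split ((RedW.split (hdec ▸ hr' : RedW _)).1)).1
            have hVr : RedW V := (RedW.split (hdec ▸ hr' : RedW _)).2
            have lt : h'.length = U.length + 1 + V.length := by rw [hdec]; simp; try omega
            have sU : (mk U).toWord.length = U.length := toWord_mk_length_eq hUr
            have sV : (mk V).toWord.length = V.length := toWord_mk_length_eq hVr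
            have c1 := nuConj x (mk U) cU (by omega) (nuLe_mk hUr hU)
            have s1 := size_conj_le x (mk U) (iv x)
            have c2 := nuMul _ (mk V) cU cV (by omega) c1 (nuLe_mk hVr hV)
            refine (c2.congr ?_).mono (by omega)
            rw [hhl, hdec]
            simp only [← FreeGroup.mul_mk]
            rw [← mk_singleton_inv]
            group
          · obtain ⟨σ, hσ, hσx, U, V, Wd, cU, cV, cW, hdec, hU, hV, hW, hcc⟩ := hTP
            have hr' : RedW h' := (RedW.split (hhl ▸ hh : RedW _)).1
            have hUr : RedW U :=
              (RedW.split ((RedW.split ((RedW.split ((RedW.split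
                (hdec ▸ hr' : RedW _)).1)).1)).1)).1
            have hVr : RedW V :=
              (RedW.split ((RedW.split ((RedW.split (hdec ▸ hr' : RedW _)).1)).1)).2
            have hWr : RedW Wd := (RedW.split (hdec ▸ hr' : RedW _)).2
            have lt : h'.length = U.length + V.length + Wd.length + 2 := by
              rw [hdec]; simp; try omega
            have sU : (mk U).toWord.length = U.length := toWord_mk_length_eq hUr
            have sV : (mk V).toWord.length = V.length := toWord_mk_length_eq hVr
            have sW : (mk Wd).toWord.length = Wd.length := toWord_mk_length_eq hWr
            have τmem := rot_cyclic _ (rot_cyclic σ hσ)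
            dsimp only at τmem
            have c1 := nuTri _ τmem (mk U) (mk V) cU cV (by omega)
              (nuLe_mk hUr hU) (nuLe_mk hVr hV)
            dsimp only at c1
            have s1 := size_tri_le σ.2.2 σ.1 σ.2.1 (mk U) (mk V)
            have c2 := nuMul _ (mk Wd) (cU + cV + 1) cW (by omega) c1 (nuLe_mk hWr hW)
            refine (c2.congr ?_).mono (by omega)
            rw [hhl, hdec, hσx]
            simp only [← FreeGroup.mul_mk]
            rw [← mk_singleton_inv]
            group
        · -- no cancellation: wrap
          have i1 : RedW ((h0 :: ht : W3) ++ [iv x]) := by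
            refine redW_concat hh ?_
            intro z hz
            rw [hhl] at hz
            simp only [List.getLast?_append, List.getLast?_singleton, Option.or_some, Option.some_or,
              Option.mem_some_iff] at hz
            subst hz
            intro hcon
            rw [iv_iv] at hcon
            exact hc2 hcon
          have i2 : RedW (x :: ((h0 :: ht : W3) ++ [iv x])) := by
            refine redW_cons i1 ?_
            intro z hz
            simp only [List.cons_append, List.head?_cons, Option.mem_some_iff] at hz
            subst hz
            intro hcon
            exact hc1 (by rw [hcon, iv_iv])
          have hred : RedW ([x] ++ (h0 :: ht : W3) ++ [iv x]) := by
            have e : ([x] ++ (h0 :: ht : W3) ++ [iv x]) = x :: ((h0 :: ht : W3) ++ [iv x]) := by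
              simp
            rwa [e]
          refine (nuLe_mk hred (D.wrap x hdh)).congr ?_
          rw [mul_mk, mul_mk]
  · -- TriS
    intro ρ hρ v w a b hlen hv hw hdv hdw
    by_cases hja : ∃ v', v = iv ρ.1 :: v'
    · obtain ⟨v', rfl⟩ := hja
      have hv'r : RedW v' := hv.tail
      simp only [List.length_cons] at hlen
      rcases extractFirst hdv (w' := v') (x := iv ρ.1) rfl with ⟨a', ha', hd'⟩ | hPQ | hTQ
      · have sv' : (mk v').toWord.length = v'.length := toWord_mk_length_eq hv'r
        have sw : (mk w).toWord.length = w.length := toWord_mk_length_eq hw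
        have c1 := nuMul (mk v') (mk [ρ.2.1]) a' 1
          (by rw [size_letter]; omega) (nuLe_mk hv'r hd') (nuLe_letter _)
        have s1 := toWord_length_mul (mk v') (mk [ρ.2.1])
        have s1' := size_letter ρ.2.1
        have c2 := nuMul _ (mk w) (a' + 1) b (by omega) c1 (nuLe_mk hw hdw)
        have s2 := toWord_length_mul (mk v' * mk [ρ.2.1]) (mk w)
        have c3 := nuMul _ (mk [ρ.2.2]) (a' + 1 + b) 1
          (by rw [size_letter]; omega) c2 (nuLe_letter _)
        refine (c3.congr ?_).mono (by omega)
        rw [show ((iv ρ.1 :: v' : W3)) = [iv ρ.1] ++ v' from rfl]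
        simp only [← FreeGroup.mul_mk]
        rw [← mk_singleton_inv]
        group
      · obtain ⟨V, U, cV, cU, hdec, hV, hU, hcc⟩ := hPQ
        rw [iv_iv] at hdec
        have hVr : RedW V := (RedW.split ((RedW.split (hdec ▸ hv'r : RedW _)).1)).1
        have hUr : RedW U := (RedW.split (hdec ▸ hv'r : RedW _)).2
        have lv : v'.length = V.length + 1 + U.length := by rw [hdec]; simp; try omega
        have sU : (mk U).toWord.length = U.length := toWord_mk_length_eq hUr
        have sV : (mk V).toWord.length = V.length := toWord_mk_length_eq hVr
        have sw : (mk w).toWord.length = w.length := toWord_mk_length_eq hw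
        have c1 := nuTri ρ hρ (mk U) (mk w) cU b (by omega)
          (nuLe_mk hUr hU) (nuLe_mk hw hdw)
        have s1 := size_tri_le ρ.1 ρ.2.1 ρ.2.2 (mk U) (mk w)
        have c2 := nuMul (mk V) _ cV (cU + b + 1) (by omega) (nuLe_mk hVr hV) c1
        refine (c2.congr ?_).mono (by omega)
        rw [show ((iv ρ.1 :: v' : W3)) = [iv ρ.1] ++ v' from rfl, hdec]
        simp only [← FreeGroup.mul_mk]
        rw [← mk_singleton_inv]
        group
      · obtain ⟨σ, hσ, hσx, V, Wd, U, cV, cW, cU, hdec, hV, hW, hU, hcc⟩ := hTQ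
        obtain ⟨hr1, hr2⟩ := rot_R5 ρ hρ σ hσ hσx
        have hVr : RedW V :=
          (RedW.split ((RedW.split ((RedW.split ((RedW.split
            (hdec ▸ hv'r : RedW _)).1)).1)).1)).1
        have hWr : RedW Wd :=
          (RedW.split ((RedW.split ((RedW.split (hdec ▸ hv'r : RedW _)).1)).1)).2
        have hUr : RedW U := (RedW.split (hdec ▸ hv'r : RedW _)).2
        have lv : v'.length = V.length + Wd.length + U.length + 2 := by
          rw [hdec]; simp; try omega
        have sU : (mk U).toWord.length = U.length := toWord_mk_length_eq hUr
        have sV : (mk V).toWord.length = V.length := toWord_mk_length_eq hVr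
        have sW : (mk Wd).toWord.length = Wd.length := toWord_mk_length_eq hWr
        have sw : (mk w).toWord.length = w.length := toWord_mk_length_eq hw
        have c1 := nuConj (iv ρ.2.1) (mk U) cU (by omega) (nuLe_mk hUr hU)
        rw [iv_iv] at c1
        have s1 := size_conj_le (iv ρ.2.1) (mk U) ρ.2.1
        have c2 := nuMul (mk Wd) _ cW cU (by omega) (nuLe_mk hWr hW) c1
        have s2 := toWord_length_mul (mk Wd) (mk [iv ρ.2.1] * mk U * mk [ρ.2.1])
        have c3 := nuMul _ (mk w) (cW + cU) b (by omega) c2 (nuLe_mk hw hdw)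
        have s3 := toWord_length_mul (mk Wd * (mk [iv ρ.2.1] * mk U * mk [ρ.2.1])) (mk w)
        have c4 := nuConj (iv ρ.2.2) _ (cW + cU + b) (by omega) c3
        rw [iv_iv] at c4
        have s4 := size_conj_le (iv ρ.2.2)
          (mk Wd * (mk [iv ρ.2.1] * mk U * mk [ρ.2.1]) * mk w) ρ.2.2
        have c5 := nuMul (mk V) _ cV (cW + cU + b) (by omega) (nuLe_mk hVr hV) c4
        refine (c5.congr ?_).mono (by omega)
        rw [show ((iv ρ.1 :: v' : W3)) = [iv ρ.1] ++ v' from rfl, hdec, hr1, hr2]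
        simp only [← FreeGroup.mul_mk]
        rw [← mk_singleton_inv, ← mk_singleton_inv, ← mk_singleton_inv]
        group
    · by_cases hjb : ∃ v'', v = v'' ++ [iv ρ.2.1]
      · obtain ⟨v'', rfl⟩ := hjb
        have hv''r : RedW v'' := (RedW.split hv).1
        simp only [List.length_append, List.length_singleton] at hlen
        rcases extractLast hdv rfl with ⟨a', ha', hd'⟩ | hPP | hTP
        · have sv'' : (mk v'').toWord.length = v''.length := toWord_mk_length_eq hv''r
          have sw : (mk w).toWord.length = w.length := toWord_mk_length_eq hw
          have c1 := nuMul (mk [ρ.1]) (mk v'') 1 a'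
            (by rw [size_letter]; omega) (nuLe_letter _) (nuLe_mk hv''r hd')
          have s1 := toWord_length_mul (mk [ρ.1]) (mk v'')
          have s1' := size_letter ρ.1
          have c2 := nuMul _ (mk w) (1 + a') b (by omega) c1 (nuLe_mk hw hdw)
          have s2 := toWord_length_mul (mk [ρ.1] * mk v'') (mk w)
          have c3 := nuMul _ (mk [ρ.2.2]) (1 + a' + b) 1
            (by rw [size_letter]; omega) c2 (nuLe_letter _)
          refine (c3.congr ?_).mono (by omega)
          simp only [← FreeGroup.mul_mk]
          rw [← mk_singleton_inv]
          group
        · obtain ⟨U, V, cU, cV, hdec, hU, hV, hcc⟩ := hPP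
          rw [iv_iv] at hdec
          have hUr : RedW U := (RedW.split ((RedW.split (hdec ▸ hv''r : RedW _)).1)).1
          have hVr : RedW V := (RedW.split (hdec ▸ hv''r : RedW _)).2
          have lv : v''.length = U.length + 1 + V.length := by rw [hdec]; simp; try omega
          have sU : (mk U).toWord.length = U.length := toWord_mk_length_eq hUr
          have sV : (mk V).toWord.length = V.length := toWord_mk_length_eq hVr
          have sw : (mk w).toWord.length = w.length := toWord_mk_length_eq hw
          have c1 := nuMul (mk V) (mk w) cV b (by omega) (nuLe_mk hVr hV) (nuLe_mk hw hdw)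
          have s1 := toWord_length_mul (mk V) (mk w)
          have c2 := nuTri ρ hρ (mk U) _ cU (cV + b) (by omega) (nuLe_mk hUr hU) c1
          refine (c2.congr ?_).mono (by omega)
          rw [hdec]
          simp only [← FreeGroup.mul_mk]
          rw [← mk_singleton_inv]
          group
        · obtain ⟨σ, hσ, hσx, U, V, Wd, cU, cV, cW, hdec, hU, hV, hW, hcc⟩ := hTP
          obtain ⟨hr1, hr2⟩ := rot_R2 ρ hρ σ hσ hσx
          have hUr : RedW U :=
            (RedW.split ((RedW.split ((RedW.split ((RedW.split
              (hdec ▸ hv''r : RedW _)).1)).1)).1)).1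
          have hVr : RedW V :=
            (RedW.split ((RedW.split ((RedW.split (hdec ▸ hv''r : RedW _)).1)).1)).2
          have hWr : RedW Wd := (RedW.split (hdec ▸ hv''r : RedW _)).2
          have lv : v''.length = U.length + V.length + Wd.length + 2 := by
            rw [hdec]; simp; try omega
          have sU : (mk U).toWord.length = U.length := toWord_mk_length_eq hUr
          have sV : (mk V).toWord.length = V.length := toWord_mk_length_eq hVr
          have sW : (mk Wd).toWord.length = Wd.length := toWord_mk_length_eq hWr
          have sw : (mk w).toWord.length = w.length := toWord_mk_length_eq hw
          have c1 := nuConj ρ.1 (mk U) cU (by omega) (nuLe_mk hUr hU)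
          have s1 := size_conj_le ρ.1 (mk U) (iv ρ.1)
          have c2 := nuMul _ (mk V) cU cV (by omega) c1 (nuLe_mk hVr hV)
          have s2 := toWord_length_mul (mk [ρ.1] * mk U * mk [iv ρ.1]) (mk V)
          have c3 := nuMul (mk Wd) (mk w) cW b (by omega) (nuLe_mk hWr hW) (nuLe_mk hw hdw)
          have s3 := toWord_length_mul (mk Wd) (mk w)
          have c4 := nuConj (iv ρ.2.2) _ (cW + b) (by omega) c3
          rw [iv_iv] at c4
          have s4 := size_conj_le (iv ρ.2.2) (mk Wd * mk w) ρ.2.2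
          have c5 := nuMul _ _ (cU + cV) (cW + b) (by omega) c2 c4
          refine (c5.congr ?_).mono (by omega)
          rw [hdec, hr1, hr2]
          simp only [← FreeGroup.mul_mk]
          rw [← mk_singleton_inv, ← mk_singleton_inv, ← mk_singleton_inv]
          group
      · by_cases hjc : ∃ w', w = iv ρ.2.1 :: w'
        · obtain ⟨w', rfl⟩ := hjc
          have hw'r : RedW w' := hw.tail
          simp only [List.length_cons] at hlen
          rcases extractFirst hdw (w' := w') (x := iv ρ.2.1) rfl with ⟨b', hb', hd'⟩ | hPQ | hTQ
          · have sv : (mk v).toWord.length = v.length := toWord_mk_length_eq hv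
            have sw' : (mk w').toWord.length = w'.length := toWord_mk_length_eq hw'r
            have c1 := nuMul (mk [ρ.1]) (mk v) 1 a
              (by rw [size_letter]; omega) (nuLe_letter _) (nuLe_mk hv hdv)
            have s1 := toWord_length_mul (mk [ρ.1]) (mk v)
            have s1' := size_letter ρ.1
            have c2 := nuMul _ (mk w') (1 + a) b' (by omega) c1 (nuLe_mk hw'r hd')
            have s2 := toWord_length_mul (mk [ρ.1] * mk v) (mk w')
            have c3 := nuMul _ (mk [ρ.2.2]) (1 + a + b') 1
              (by rw [size_letter]; omega) c2 (nuLe_letter _)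
            refine (c3.congr ?_).mono (by omega)
            rw [show ((iv ρ.2.1 :: w' : W3)) = [iv ρ.2.1] ++ w' from rfl]
            simp only [← FreeGroup.mul_mk]
            rw [← mk_singleton_inv]
            group
          · obtain ⟨V, U, cV, cU, hdec, hV, hU, hcc⟩ := hPQ
            rw [iv_iv] at hdec
            have hVr : RedW V := (RedW.split ((RedW.split (hdec ▸ hw'r : RedW _)).1)).1
            have hUr : RedW U := (RedW.split (hdec ▸ hw'r : RedW _)).2
            have lw : w'.length = V.length + 1 + U.length := by rw [hdec]; simp; try omega
            have sU : (mk U).toWord.length = U.length := toWord_mk_length_eq hUr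
            have sV : (mk V).toWord.length = V.length := toWord_mk_length_eq hVr
            have sv : (mk v).toWord.length = v.length := toWord_mk_length_eq hv
            have c1 := nuMul (mk v) (mk V) a cV (by omega) (nuLe_mk hv hdv) (nuLe_mk hVr hV)
            have s1 := toWord_length_mul (mk v) (mk V)
            have c2 := nuTri ρ hρ _ (mk U) (a + cV) cU (by omega) c1 (nuLe_mk hUr hU)
            refine (c2.congr ?_).mono (by omega)
            rw [show ((iv ρ.2.1 :: w' : W3)) = [iv ρ.2.1] ++ w' from rfl, hdec]
            simp only [← FreeGroup.mul_mk]
            rw [← mk_singleton_inv]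
            group
          · obtain ⟨σ, hσ, hσx, V, Wd, U, cV, cW, cU, hdec, hV, hW, hU, hcc⟩ := hTQ
            obtain ⟨hr1, hr2⟩ := rot_R3 ρ hρ σ hσ hσx
            have hVr : RedW V :=
              (RedW.split ((RedW.split ((RedW.split ((RedW.split
                (hdec ▸ hw'r : RedW _)).1)).1)).1)).1
            have hWr : RedW Wd :=
              (RedW.split ((RedW.split ((RedW.split (hdec ▸ hw'r : RedW _)).1)).1)).2
            have hUr : RedW U := (RedW.split (hdec ▸ hw'r : RedW _)).2
            have lw : w'.length = V.length + Wd.length + U.length + 2 := by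
              rw [hdec]; simp; try omega
            have sU : (mk U).toWord.length = U.length := toWord_mk_length_eq hUr
            have sV : (mk V).toWord.length = V.length := toWord_mk_length_eq hVr
            have sW : (mk Wd).toWord.length = Wd.length := toWord_mk_length_eq hWr
            have sv : (mk v).toWord.length = v.length := toWord_mk_length_eq hv
            have c1 := nuMul (mk v) (mk V) a cV (by omega) (nuLe_mk hv hdv) (nuLe_mk hVr hV)
            have s1 := toWord_length_mul (mk v) (mk V)
            have c2 := nuConj ρ.1 _ (a + cV) (by omega) c1
            have s2 := size_conj_le ρ.1 (mk v * mk V) (iv ρ.1)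
            have c3 := nuMul _ (mk Wd) (a + cV) cW (by omega) c2 (nuLe_mk hWr hW)
            have s3 := toWord_length_mul (mk [ρ.1] * (mk v * mk V) * mk [iv ρ.1]) (mk Wd)
            have c4 := nuConj (iv ρ.2.2) (mk U) cU (by omega) (nuLe_mk hUr hU)
            rw [iv_iv] at c4
            have s4 := size_conj_le (iv ρ.2.2) (mk U) ρ.2.2
            have c5 := nuMul _ _ (a + cV + cW) cU (by omega) c3 c4
            refine (c5.congr ?_).mono (by omega)
            rw [show ((iv ρ.2.1 :: w' : W3)) = [iv ρ.2.1] ++ w' from rfl, hdec, hr1, hr2]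
            simp only [← FreeGroup.mul_mk]
            rw [← mk_singleton_inv, ← mk_singleton_inv, ← mk_singleton_inv]
            group
        · by_cases hjd : ∃ w'', w = w'' ++ [iv ρ.2.2]
          · obtain ⟨w'', rfl⟩ := hjd
            have hw''r : RedW w'' := (RedW.split hw).1
            simp only [List.length_append, List.length_singleton] at hlen
            rcases extractLast hdw rfl with ⟨b', hb', hd'⟩ | hPP | hTP
            · have sv : (mk v).toWord.length = v.length := toWord_mk_length_eq hv
              have sw'' : (mk w'').toWord.length = w''.length := toWord_mk_length_eq hw''r
              have c1 := nuMul (mk [ρ.1]) (mk v) 1 a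
                (by rw [size_letter]; omega) (nuLe_letter _) (nuLe_mk hv hdv)
              have s1 := toWord_length_mul (mk [ρ.1]) (mk v)
              have s1' := size_letter ρ.1
              have c2 := nuMul _ (mk [ρ.2.1]) (1 + a) 1
                (by rw [size_letter]; omega) c1 (nuLe_letter _)
              have s2 := toWord_length_mul (mk [ρ.1] * mk v) (mk [ρ.2.1])
              have s2' := size_letter ρ.2.1
              have c3 := nuMul _ (mk w'') (1 + a + 1) b' (by omega) c2 (nuLe_mk hw''r hd')
              refine (c3.congr ?_).mono (by omega)
              simp only [← FreeGroup.mul_mk]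
              rw [← mk_singleton_inv]
              group
            · obtain ⟨U, V, cU, cV, hdec, hU, hV, hcc⟩ := hPP
              rw [iv_iv] at hdec
              have hUr : RedW U := (RedW.split ((RedW.split (hdec ▸ hw''r : RedW _)).1)).1
              have hVr : RedW V := (RedW.split (hdec ▸ hw''r : RedW _)).2
              have lw : w''.length = U.length + 1 + V.length := by rw [hdec]; simp; try omega
              have sU : (mk U).toWord.length = U.length := toWord_mk_length_eq hUr
              have sV : (mk V).toWord.length = V.length := toWord_mk_length_eq hVr
              have sv : (mk v).toWord.length = v.length := toWord_mk_length_eq hv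
              have c1 := nuTri ρ hρ (mk v) (mk U) a cU (by omega)
                (nuLe_mk hv hdv) (nuLe_mk hUr hU)
              have s1 := size_tri_le ρ.1 ρ.2.1 ρ.2.2 (mk v) (mk U)
              have c2 := nuMul _ (mk V) (a + cU + 1) cV (by omega) c1 (nuLe_mk hVr hV)
              refine (c2.congr ?_).mono (by omega)
              rw [hdec]
              simp only [← FreeGroup.mul_mk]
              rw [← mk_singleton_inv]
              group
            · obtain ⟨σ, hσ, hσx, U, V, Wd, cU, cV, cW, hdec, hU, hV, hW, hcc⟩ := hTP
              obtain ⟨hr1, hr2⟩ := rot_R4 ρ hρ σ hσ hσx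
              have hUr : RedW U :=
                (RedW.split ((RedW.split ((RedW.split ((RedW.split
                  (hdec ▸ hw''r : RedW _)).1)).1)).1)).1
              have hVr : RedW V :=
                (RedW.split ((RedW.split ((RedW.split (hdec ▸ hw''r : RedW _)).1)).1)).2
              have hWr : RedW Wd := (RedW.split (hdec ▸ hw''r : RedW _)).2
              have lw : w''.length = U.length + V.length + Wd.length + 2 := by
                rw [hdec]; simp; try omega
              have sU : (mk U).toWord.length = U.length := toWord_mk_length_eq hUr
              have sV : (mk V).toWord.length = V.length := toWord_mk_length_eq hVr
              have sW : (mk Wd).toWord.length = Wd.length := toWord_mk_length_eq hWr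
              have sv : (mk v).toWord.length = v.length := toWord_mk_length_eq hv
              have c1 := nuConj ρ.2.1 (mk U) cU (by omega) (nuLe_mk hUr hU)
              have s1 := size_conj_le ρ.2.1 (mk U) (iv ρ.2.1)
              have c2 := nuMul (mk v) _ a cU (by omega) (nuLe_mk hv hdv) c1
              have s2 := toWord_length_mul (mk v) (mk [ρ.2.1] * mk U * mk [iv ρ.2.1])
              have c3 := nuMul _ (mk V) (a + cU) cV (by omega) c2 (nuLe_mk hVr hV)
              have s3 := toWord_length_mul (mk v * (mk [ρ.2.1] * mk U * mk [iv ρ.2.1])) (mk V)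
              have c4 := nuConj ρ.1 _ (a + cU + cV) (by omega) c3
              have s4 := size_conj_le ρ.1
                (mk v * (mk [ρ.2.1] * mk U * mk [iv ρ.2.1]) * mk V) (iv ρ.1)
              have c5 := nuMul _ (mk Wd) (a + cU + cV) cW (by omega) c4 (nuLe_mk hWr hW)
              refine (c5.congr ?_).mono (by omega)
              rw [hdec, hr1, hr2]
              simp only [← FreeGroup.mul_mk]
              rw [← mk_singleton_inv, ← mk_singleton_inv, ← mk_singleton_inv]
              group
          · -- no junction cancels: assemble the reduced word directly
            have hred : RedW ([ρ.1] ++ v ++ [ρ.2.1] ++ w ++ [ρ.2.2]) := by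
              refine redW_five hρ hv hw ?_ ?_ ?_ ?_
              · intro z hz hcon
                rcases v with _ | ⟨v0, v'⟩
                · simp at hz
                · simp only [List.head?_cons, Option.mem_some_iff] at hz
                  subst hz
                  exact hja ⟨v', by rw [hcon, iv_iv]⟩
              · intro z hz hcon
                obtain ⟨v'', he⟩ := List.getLast?_eq_some_iff.mp hz
                exact hjb ⟨v'', by rw [he, hcon]⟩
              · intro z hz hcon
                rcases w with _ | ⟨w0, w'⟩
                · simp at hz
                · simp only [List.head?_cons, Option.mem_some_iff] at hz
                  subst hz
                  exact hjc ⟨w', by rw [hcon, iv_iv]⟩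
              · intro z hz hcon
                obtain ⟨w'', he⟩ := List.getLast?_eq_some_iff.mp hz
                exact hjd ⟨w'', by rw [he, hcon]⟩
            refine (nuLe_mk hred (D.triple hρ hdv hdw)).congr ?_
            rw [mul_mk, mul_mk, mul_mk, mul_mk]

/-! ### Soundness: cost lower bound on positive sorted words -/

def PosW (w : W3) : Prop := ∀ l ∈ w, l.2 = true
def SortW (w : W3) : Prop := w.Pairwise (fun p q => p.1 ≤ q.1)
def FullW (w : W3) : Prop := (∃ l ∈ w, l.1 = 0) ∧ (∃ l ∈ w, l.1 = 1) ∧ (∃ l ∈ w, l.1 = 2)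

lemma FullW.mono_left {v u : W3} (h : FullW v) : FullW (v ++ u) := by
  obtain ⟨⟨l0, h0, e0⟩, ⟨l1, h1, e1⟩, ⟨l2, h2, e2⟩⟩ := h
  exact ⟨⟨l0, by simp [h0], e0⟩, ⟨l1, by simp [h1], e1⟩, ⟨l2, by simp [h2], e2⟩⟩

lemma FullW.mono_right {v u : W3} (h : FullW u) : FullW (v ++ u) := by
  obtain ⟨⟨l0, h0, e0⟩, ⟨l1, h1, e1⟩, ⟨l2, h2, e2⟩⟩ := h
  exact ⟨⟨l0, by simp [h0], e0⟩, ⟨l1, by simp [h1], e1⟩, ⟨l2, by simp [h2], e2⟩⟩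

theorem mono_bound : ∀ {w : W3} {c : ℕ}, D w c → PosW w → SortW w →
    w.length ≤ c + 2 ∧ (¬ FullW w → w.length ≤ c) := by
  intro w c h
  induction h with
  | nil => intro _ _; simp
  | single x => intro _ _; refine ⟨by simp, by intro _; simp⟩
  | @append v u a b hv hu ihv ihu =>
    intro hp hs
    have hpv : PosW v := fun l hl => hp l (by simp [hl])
    have hpu : PosW u := fun l hl => hp l (by simp [hl])
    obtain ⟨hsv, hsu, hcross⟩ := List.pairwise_append.mp hs
    obtain ⟨e1v, e2v⟩ := ihv hpv hsv
    obtain ⟨e1u, e2u⟩ := ihu hpu hsu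
    have hnotboth : ¬ (FullW v ∧ FullW u) := by
      rintro ⟨⟨_, _, l2, hl2, h2⟩, ⟨l0, hl0, h0⟩, _, _⟩
      have := hcross l2 hl2 l0 hl0
      rw [h2, h0] at this
      exact absurd this (by decide)
    constructor
    · by_cases hfv : FullW v
      · have := e2u (fun h => hnotboth ⟨hfv, h⟩)
        simp only [List.length_append]; omega
      · have := e2v hfv; simp only [List.length_append]; omega
    · intro hnf
      have h1 := e2v (fun hf => hnf hf.mono_left)
      have h2 := e2u (fun hf => hnf hf.mono_right)
      simp only [List.length_append]; omega
  | @wrap x v a hv ih =>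
    intro hp _
    exfalso
    have h1 : x.2 = true := hp x (by simp)
    have h2 : (iv x).2 = true := hp (iv x) (by simp)
    rw [iv, h1] at h2
    simp at h2
  | @triple ρ hρ v u a b hv hu ihv ihu =>
    intro hp hs
    have hp0 : ρ.1.2 = true := hp _ (by simp)
    have hp1 : ρ.2.1.2 = true := hp _ (by simp)
    have hp2 : ρ.2.2.2 = true := hp _ (by simp)
    obtain ⟨hsA, hsB, cross1⟩ := List.pairwise_append.mp hs
    obtain ⟨hsC, hsu, cross2⟩ := List.pairwise_append.mp hsA
    obtain ⟨hsD, hsm, cross3⟩ := List.pairwise_append.mp hsC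
    obtain ⟨hs1, hsv, cross4⟩ := List.pairwise_append.mp hsD
    have h01 : ρ.1.1 ≤ ρ.2.1.1 := cross3 ρ.1 (by simp) ρ.2.1 (by simp)
    have h12 : ρ.2.1.1 ≤ ρ.2.2.1 := cross1 ρ.2.1 (by simp) ρ.2.2 (by simp)
    have hABC : ρ = ((0, true), (1, true), (2, true)) := by
      fin_cases hρ
      · rfl
      · exact absurd h12 (by decide)
      · exact absurd h01 (by decide)
      · exact absurd hp0 (by decide)
      · exact absurd hp0 (by decide)
      · exact absurd hp0 (by decide)
    have hnfv : ¬ FullW v := by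
      rintro ⟨_, _, l2, hl2, e2⟩
      have := cross3 l2 (by simp [hl2]) ρ.2.1 (by simp)
      rw [e2, hABC] at this
      exact absurd this (by decide)
    have hnfu : ¬ FullW u := by
      rintro ⟨⟨l0, hl0, e0⟩, _, _⟩
      have := cross2 ρ.2.1 (by simp) l0 hl0
      rw [e0, hABC] at this
      exact absurd this (by decide)
    have hpv : PosW v := fun l hl => hp l (by simp [hl])
    have hpu : PosW u := fun l hl => hp l (by simp [hl])
    have h1 := (ihv hpv hsv).2 hnfv
    have h2 := (ihu hpu hsu).2 hnfu
    constructor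
    · simp only [List.length_append, List.length_singleton]; omega
    · intro hnf
      exfalso
      apply hnf
      refine ⟨⟨ρ.1, by simp, by rw [hABC]⟩, ⟨ρ.2.1, by simp, by rw [hABC]⟩,
        ⟨ρ.2.2, by simp, by rw [hABC]⟩⟩

/-! ### Top-level interface lemmas -/

lemma nuLe_mul {g h : FreeGroup (Fin 3)} {a b : ℕ} (hg : NuLe g a) (hh : NuLe h b) :
    NuLe (g * h) (a + b) := by
  obtain ⟨a', ha, hg'⟩ := hg
  obtain ⟨b', hb, hh'⟩ := hh
  have := (core (g.toWord.length + h.toWord.length)).1 g.toWord h.toWord a' b' le_rfl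
    (redW_toWord g) (redW_toWord h) hg' hh'
  rw [mk_toWord, mk_toWord] at this
  exact this.mono (by omega)

lemma nuLe_conj_letter (x : L3) {g : FreeGroup (Fin 3)} {a : ℕ} (hg : NuLe g a) :
    NuLe (mk [x] * g * mk [iv x]) a := by
  obtain ⟨a', ha, hg'⟩ := hg
  have := (core (g.toWord.length + 2)).2.1 x g.toWord a' le_rfl (redW_toWord g) hg'
  rw [mk_toWord] at this
  exact this.mono ha

lemma nuLe_conj_aux : ∀ (m : ℕ) (u g : FreeGroup (Fin 3)) (a : ℕ), u.toWord.length ≤ m →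
    NuLe g a → NuLe (u * g * u⁻¹) a := by
  intro m
  induction m with
  | zero =>
    intro u g a hu hg
    have h0 : u.toWord = [] := List.length_eq_zero_iff.mp (le_antisymm hu (Nat.zero_le _))
    have : u = 1 := FreeGroup.toWord_eq_nil_iff.mp h0
    subst this
    simpa using hg
  | succ m ih =>
    intro u g a hu hg
    rcases hW : u.toWord with _ | ⟨l, t⟩
    · have : u = 1 := FreeGroup.toWord_eq_nil_iff.mp hW
      subst this
      simpa using hg
    · have htr : RedW t := (hW ▸ redW_toWord u).tail
      have hu' : u = mk [l] * mk t := by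
        rw [FreeGroup.mul_mk]
        conv_lhs => rw [← FreeGroup.mk_toWord (x := u), hW]
        rfl
      have htW : (mk t).toWord = t := by rw [FreeGroup.toWord_mk, reduce_self_of_redW htr]
      have hlen' : (mk t).toWord.length ≤ m := by
        rw [htW]
        have := congrArg List.length hW
        simp at this
        omega
      have inner := ih (mk t) g a hlen' hg
      have outer := nuLe_conj_letter l inner
      refine outer.congr ?_
      rw [hu', ← mk_singleton_inv]
      group

lemma nuLe_conj {u g : FreeGroup (Fin 3)} {a : ℕ} (hg : NuLe g a) : NuLe (u * g * u⁻¹) a :=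
  nuLe_conj_aux u.toWord.length u g a le_rfl hg

lemma redW_of_posW : ∀ {w : W3}, PosW w → RedW w := by
  intro w
  induction w with
  | nil => intro _; exact RedW.nil
  | cons x t ih =>
    intro hp
    refine List.isChain_cons.mpr ⟨?_, ih (fun l hl => hp l (by simp [hl]))⟩
    intro z hz hcon
    have hx : x.2 = true := hp x (by simp)
    have hz' : z.2 = true := hp z (List.mem_cons_of_mem _ (List.mem_of_mem_head? hz))
    rw [hcon, iv, hz'] at hx
    simp at hx

lemma of_eq_mk (a : Fin 3) : (FreeGroup.of a : FreeGroup (Fin 3)) = mk [(a, true)] := rfl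

set_option maxRecDepth 10000 in
lemma nuLe_abc :
    NuLe (FreeGroup.of 0 * FreeGroup.of 1 * FreeGroup.of 2 : FreeGroup (Fin 3)) 1 := by
  have hd : D [((0 : Fin 3), true), ((1 : Fin 3), true), ((2 : Fin 3), true)] 1 := by
    have := D.triple (ρ := (((0 : Fin 3), true), ((1 : Fin 3), true), ((2 : Fin 3), true)))
      (by decide) D.nil D.nil
    simpa using this
  have hred : RedW [((0 : Fin 3), true), ((1 : Fin 3), true), ((2 : Fin 3), true)] := by
    apply redW_of_posW
    intro l hl
    simp at hl
    rcases hl with rfl | rfl | rfl <;> rfl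
  have := nuLe_mk hred hd
  refine this.congr ?_
  rw [of_eq_mk, of_eq_mk, of_eq_mk, FreeGroup.mul_mk, FreeGroup.mul_mk]
  rfl

set_option maxRecDepth 10000 in
lemma nuLe_abc_inv :
    NuLe ((FreeGroup.of 0 * FreeGroup.of 1 * FreeGroup.of 2 : FreeGroup (Fin 3)))⁻¹ 1 := by
  have hd : D [((2 : Fin 3), false), ((1 : Fin 3), false), ((0 : Fin 3), false)] 1 := by
    have := D.triple (ρ := (((2 : Fin 3), false), ((1 : Fin 3), false), ((0 : Fin 3), false)))
      (by decide) D.nil D.nil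
    simpa using this
  have hred : RedW [((2 : Fin 3), false), ((1 : Fin 3), false), ((0 : Fin 3), false)] := by
    refine List.isChain_cons_cons.mpr ⟨?_, List.isChain_cons_cons.mpr ⟨?_, List.isChain_singleton _⟩⟩ <;>
      decide
  have := nuLe_mk hred hd
  refine this.congr ?_
  rw [of_eq_mk, of_eq_mk, of_eq_mk, FreeGroup.mul_mk, FreeGroup.mul_mk, FreeGroup.inv_mk]
  rfl

lemma nuLe_prod : ∀ (l : List (FreeGroup (Fin 3))), (∀ x ∈ l, NuLe x 1) →
    NuLe l.prod l.length := by
  intro l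
  induction l with
  | nil => intro _; simpa using nuLe_one
  | cons x t ih =>
    intro h
    have h1 := h x (by simp)
    have h2 := ih (fun y hy => h y (by simp [hy]))
    have := nuLe_mul h1 h2
    rw [List.prod_cons]
    exact this.mono (by simp; omega)

lemma exists_isSpelling (gg : FreeGroup (Fin 3)) : ∃ L, IsSpelling gg L := by
  obtain ⟨w, rfl⟩ : ∃ w, gg = mk w := ⟨gg.toWord, FreeGroup.mk_toWord.symm⟩
  induction w with
  | nil => exact ⟨[], by simp [IsSpelling, ← FreeGroup.one_eq_mk]⟩
  | cons l t ih =>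
    obtain ⟨L, hL⟩ := ih
    refine ⟨(1, l.1, l.2) :: L, ?_⟩
    unfold IsSpelling at *
    simp only [List.map_cons, List.prod_cons, hL]
    have hfac : spellingFactor ((1 : FreeGroup (Fin 3)), l.1, l.2) = mk [l] := by
      unfold spellingFactor
      rcases l with ⟨i, b⟩
      cases b
      · simp only [if_neg Bool.false_ne_true, one_mul, inv_one, mul_one]
        rw [of_eq_mk, mk_singleton_inv]
        rfl
      · simp only [if_pos rfl, one_mul, inv_one, mul_one]
        rfl
    rw [hfac, FreeGroup.mul_mk]
    rfl

lemma pow_of_eq_mk (a : Fin 3) (m : ℕ) :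
    (FreeGroup.of a ^ m : FreeGroup (Fin 3)) = mk (List.replicate m (a, true)) := by
  calc (FreeGroup.of a ^ m : FreeGroup (Fin 3))
      = mk ((FreeGroup.of a ^ m : FreeGroup (Fin 3)).toWord) := FreeGroup.mk_toWord.symm
    _ = mk (List.replicate m (a, true)) := by rw [FreeGroup.toWord_of_pow]

lemma pairwise_replicate_le (m : ℕ) (x : L3) :
    (List.replicate m x).Pairwise (fun p q => p.1 ≤ q.1) := by
  induction m with
  | zero => simp
  | succ m ih =>
    rw [List.replicate_succ]
    refine List.pairwise_cons.mpr ⟨?_, ih⟩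
    intro z hz
    rw [List.eq_of_mem_replicate hz]

lemma nuLe_factor (q : FreeGroup (Fin 3) × Fin 3 × Bool) : NuLe (spellingFactor q) 1 := by
  rcases q with ⟨u, i, b⟩
  unfold spellingFactor
  apply nuLe_conj
  cases b
  · simp only [Bool.false_eq_true, if_false]
    refine (nuLe_letter (iv ((i : Fin 3), true))).congr ?_
    rw [← mk_singleton_inv, ← of_eq_mk]
  · simp only [if_true]
    refine (nuLe_letter ((i : Fin 3), true)).congr ?_
    rw [← of_eq_mk]

end SP

theorem spellingLength_lower_bound_ABC (p n i j k : ℕ)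
    (A B C : FreeGroup (Fin 3))
    (hA : A = FreeGroup.of 0) (hB : B = FreeGroup.of 1) (hC : C = FreeGroup.of 2)
    (h₀ : FreeGroup (Fin 3)) (f : Fin p → FreeGroup (Fin 3)) (g : Fin n → FreeGroup (Fin 3))
    (G : FreeGroup (Fin 3))
    (hG : G = h₀ * A ^ i * B ^ j * C ^ k * h₀⁻¹ *
        (List.ofFn fun a => f a * (A * B * C) * (f a)⁻¹).prod *
        (List.ofFn fun b => g b * (A * B * C)⁻¹ * (g b)⁻¹).prod) :
    (spellingLength G : ℤ) ≥ (i : ℤ) + j + k - (p + n + 2) := by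
  subst hA hB hC
  classical
  -- a spelling of minimal length
  have hne : {r | ∃ L, IsSpelling G L ∧ L.length = r}.Nonempty := by
    obtain ⟨L, hL⟩ := SP.exists_isSpelling G
    exact ⟨L.length, L, hL, rfl⟩
  have hmem : ∃ L, IsSpelling G L ∧ L.length = spellingLength G := Nat.sInf_mem hne
  obtain ⟨L, hL, hLlen⟩ := hmem
  set r := spellingLength G with hrdef
  -- cost of G
  have hG1 : SP.NuLe G r := by
    rw [← hL]
    have hall : ∀ x ∈ L.map spellingFactor, SP.NuLe x 1 := by
      rintro x hx
      simp only [List.mem_map] at hx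
      obtain ⟨q, _, rfl⟩ := hx
      exact SP.nuLe_factor q
    have := SP.nuLe_prod (L.map spellingFactor) hall
    rw [List.length_map, hLlen] at this
    exact this
  set ABC := (FreeGroup.of 0 * FreeGroup.of 1 * FreeGroup.of 2 : FreeGroup (Fin 3)) with hABC
  set Pp := (List.ofFn fun a => f a * ABC * (f a)⁻¹).prod with hPp
  set Qp := (List.ofFn fun b => g b * ABC⁻¹ * (g b)⁻¹).prod with hQp
  -- cost of Qp⁻¹
  have hQinv : SP.NuLe Qp⁻¹ n := by
    rw [hQp, List.prod_inv_reverse]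
    have hall : ∀ x ∈ ((List.ofFn fun b => g b * ABC⁻¹ * (g b)⁻¹).map fun x => x⁻¹).reverse,
        SP.NuLe x 1 := by
      intro x hx
      simp only [List.mem_reverse, List.mem_map, List.mem_ofFn] at hx
      obtain ⟨y, ⟨b, rfl⟩, rfl⟩ := hx
      have e : (g b * ABC⁻¹ * (g b)⁻¹)⁻¹ = g b * ABC * (g b)⁻¹ := by group
      rw [e]
      exact SP.nuLe_conj SP.nuLe_abc
    have := SP.nuLe_prod _ hall
    simpa using this
  -- cost of Pp⁻¹
  have hPinv : SP.NuLe Pp⁻¹ p := by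
    rw [hPp, List.prod_inv_reverse]
    have hall : ∀ x ∈ ((List.ofFn fun a => f a * ABC * (f a)⁻¹).map fun x => x⁻¹).reverse,
        SP.NuLe x 1 := by
      intro x hx
      simp only [List.mem_reverse, List.mem_map, List.mem_ofFn] at hx
      obtain ⟨y, ⟨a, rfl⟩, rfl⟩ := hx
      have e : (f a * ABC * (f a)⁻¹)⁻¹ = f a * ABC⁻¹ * (f a)⁻¹ := by group
      rw [e]
      exact SP.nuLe_conj SP.nuLe_abc_inv
    have := SP.nuLe_prod _ hall
    simpa using this
  -- cost of X
  have big := SP.nuLe_mul (SP.nuLe_mul hG1 hQinv) hPinv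
  have conj := SP.nuLe_conj (u := h₀⁻¹) big
  have hXeq : h₀⁻¹ * (G * Qp⁻¹ * Pp⁻¹) * h₀⁻¹⁻¹ =
      (FreeGroup.of 0 ^ i * FreeGroup.of 1 ^ j * FreeGroup.of 2 ^ k : FreeGroup (Fin 3)) := by
    rw [hG]; group
  have hXnu : SP.NuLe
      (FreeGroup.of 0 ^ i * FreeGroup.of 1 ^ j * FreeGroup.of 2 ^ k : FreeGroup (Fin 3))
      (r + n + p) := conj.congr hXeq
  -- the reduced word of X
  set R : SP.W3 := List.replicate i ((0 : Fin 3), true) ++ List.replicate j ((1 : Fin 3), true)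
    ++ List.replicate k ((2 : Fin 3), true) with hR
  have hXmk : (FreeGroup.of 0 ^ i * FreeGroup.of 1 ^ j * FreeGroup.of 2 ^ k :
      FreeGroup (Fin 3)) = FreeGroup.mk R := by
    rw [SP.pow_of_eq_mk, SP.pow_of_eq_mk, SP.pow_of_eq_mk, FreeGroup.mul_mk, FreeGroup.mul_mk]
  have hpos : SP.PosW R := by
    intro l hl
    rw [hR] at hl
    simp only [List.mem_append, List.mem_replicate] at hl
    rcases hl with (⟨_, rfl⟩ | ⟨_, rfl⟩) | ⟨_, rfl⟩ <;> rfl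
  have hsort : SP.SortW R := by
    rw [hR]
    refine List.pairwise_append.mpr ⟨List.pairwise_append.mpr
      ⟨SP.pairwise_replicate_le _ _, SP.pairwise_replicate_le _ _, ?_⟩,
      SP.pairwise_replicate_le _ _, ?_⟩
    · intro q hq q' hq'
      rw [List.eq_of_mem_replicate hq, List.eq_of_mem_replicate hq']
      decide
    · intro q hq q' hq'
      simp only [List.mem_append] at hq
      rw [List.eq_of_mem_replicate hq']
      rcases hq with hq | hq <;> rw [List.eq_of_mem_replicate hq] <;> decide
  have htoW : (FreeGroup.mk R).toWord = R := by
    rw [FreeGroup.toWord_mk, SP.reduce_self_of_redW (SP.redW_of_posW hpos)]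
  obtain ⟨c, hc, hD⟩ := hXnu
  rw [hXmk] at hD
  unfold SP.Nu at hD
  rw [htoW] at hD
  have hBnd := (SP.mono_bound hD hpos hsort).1
  have hlenR : R.length = i + j + k := by rw [hR]; simp; try omega
  have hfinal : i + j + k ≤ r + n + p + 2 := by omega
  omega
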